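/- arXiv:1401.1397 — 7 statements merged into one kernel-verified Lean document; each statement's English description precedes it below -/
import Mathlib

section
/- With the setup of observed conditional frequencies c_{ij} = g_{ij}/h_{ij} (reduced fractions, column sums ∑_i c_{ij} = 1) and m_j = lcm_i(h_{ij}): there exists a nonnegative integer table {s_{ij}} with all column sums positive, conditional frequencies equal to c_{ij}, and total sum N, if and only if the linear Diophantine equation ∑_{j=1}^{J} m_j·x_j = N has a solution in positive integers x_1, …, x_J. -/
theorem stmt_4 (I J N : ℕ) (hI : 0 < I) (hJ : 0 < J) (hN : 0 < N)
    (g h : Fin I → Fin J → ℕ)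
    (hcop : ∀ i j, Nat.Coprime (g i j) (h i j))
    (hpos : ∀ i j, 0 < h i j)
    (c : Fin I → Fin J → ℚ) (hc : ∀ i j, c i j = (g i j : ℚ) / (h i j : ℚ))
    (hsum1 : ∀ j, ∑ i, c i j = 1)
    (m : Fin J → ℕ) (hm : ∀ j, m j = Finset.univ.lcm (fun i => h i j)) :
    (∃ s : Fin I → Fin J → ℕ,
        (∀ j, 0 < ∑ i, s i j) ∧
        (∑ j, ∑ i, s i j) = N ∧
        (∀ i j, (s i j : ℚ) = c i j * ((∑ i', s i' j : ℕ) : ℚ)))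
    ↔ ∃ x : Fin J → ℕ, (∀ j, 0 < x j) ∧ ∑ j, m j * x j = N := by
  have hdvd : ∀ i j, h i j ∣ m j := by
    intro i j
    rw [hm]
    exact Finset.dvd_lcm (Finset.mem_univ i)
  have hmpos : ∀ j, 0 < m j := fun j => Nat.pos_of_ne_zero (by
    intro hz
    rw [hm j, Finset.lcm_eq_zero_iff] at hz
    obtain ⟨i, -, hi⟩ := hz
    exact absurd hi (hpos i j).ne')
  constructor
  · rintro ⟨s, hspos, hsN, hsc⟩
    have key : ∀ j, m j ∣ ∑ i, s i j := by
      intro j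
      rw [hm]
      apply Finset.lcm_dvd
      intro i _
      -- from hsc: h i j * s i j = g i j * ∑ s
      have hne : (h i j : ℚ) ≠ 0 := by exact_mod_cast (hpos i j).ne'
      have hq : (s i j : ℚ) * h i j = g i j * (∑ i', s i' j : ℕ) := by
        have := hsc i j
        rw [hc, div_mul_eq_mul_div, eq_div_iff hne] at this
        exact this
      have hn : s i j * h i j = g i j * ∑ i', s i' j := by exact_mod_cast hq
      have : h i j ∣ g i j * ∑ i', s i' j := ⟨s i j, by rw [← hn, mul_comm]⟩
      exact ((hcop i j).symm.dvd_of_dvd_mul_left this)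
    refine ⟨fun j => (∑ i, s i j) / m j, ?_, ?_⟩
    · intro j
      exact Nat.div_pos (Nat.le_of_dvd (hspos j) (key j)) (hmpos j)
    · calc ∑ j, m j * ((∑ i, s i j) / m j) = ∑ j, ∑ i, s i j := by
            refine Finset.sum_congr rfl fun j _ => ?_
            exact Nat.mul_div_cancel' (key j)
        _ = N := hsN
  · rintro ⟨x, hxpos, hxN⟩
    set s : Fin I → Fin J → ℕ := fun i j => g i j * (m j * x j / h i j) with hs
    have scast : ∀ i j, (s i j : ℚ) = c i j * (m j * x j) := by
      intro i j
      have hd : h i j ∣ m j * x j := (hdvd i j).mul_right _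
      have hne : (h i j : ℚ) ≠ 0 := by exact_mod_cast (hpos i j).ne'
      have hcd : ((m j * x j / h i j : ℕ) : ℚ) = (m j * x j : ℚ) / h i j := by
        rw [Nat.cast_div hd hne]
        push_cast
        ring
      rw [hs]
      push_cast [hcd, hc]
      ring
    have colsum : ∀ j, ∑ i, s i j = m j * x j := by
      intro j
      have : ((∑ i, s i j : ℕ) : ℚ) = ((m j * x j : ℕ) : ℚ) := by
        push_cast [scast]
        rw [← Finset.sum_mul, hsum1 j, one_mul]
      exact_mod_cast this
    refine ⟨s, ?_, ?_, ?_⟩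
    · intro j
      rw [colsum j]
      exact Nat.mul_pos (hmpos j) (hxpos j)
    · simp only [colsum]; exact hxN
    · intro i j
      rw [colsum j, scast i j]
      push_cast
      ring
end

section
/- In the setting of Theorem relating conditionals to marginals: the map sending a positive integer solution (x_1, …, x_J) of ∑_j m_j·x_j = N to the marginal vector (s_{+1}, …, s_{+J}) = (m_1·x_1, …, m_J·x_J) is a bijection between the set of positive integer solutions of the Diophantine equation and the set of possible column-sum (marginal) vectors of nonnegative integer tables with total N, positive column sums, and conditional frequencies c_{ij}. -/
theorem stmt_5 (I J N : ℕ) (hI : 0 < I) (hJ : 0 < J) (hN : 0 < N)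
    (g h : Fin I → Fin J → ℕ)
    (hcop : ∀ i j, Nat.Coprime (g i j) (h i j))
    (hpos : ∀ i j, 0 < h i j)
    (c : Fin I → Fin J → ℚ) (hc : ∀ i j, c i j = (g i j : ℚ) / (h i j : ℚ))
    (hsum1 : ∀ j, ∑ i, c i j = 1)
    (m : Fin J → ℕ) (hm : ∀ j, m j = Finset.univ.lcm (fun i => h i j)) :
    Set.BijOn (fun (x : Fin J → ℕ) (j : Fin J) => m j * x j)
      {x : Fin J → ℕ | (∀ j, 0 < x j) ∧ ∑ j, m j * x j = N}
      {sm : Fin J → ℕ | ∃ s : Fin I → Fin J → ℕ,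
          (∀ j, 0 < ∑ i, s i j) ∧
          (∑ j, ∑ i, s i j) = N ∧
          (∀ i j, (s i j : ℚ) = c i j * ((∑ i', s i' j : ℕ) : ℚ)) ∧
          (∀ j, sm j = ∑ i, s i j)} := by
  have hdvd : ∀ i j, h i j ∣ m j := by
    intro i j; rw [hm]; exact Finset.dvd_lcm (Finset.mem_univ i)
  have hmpos : ∀ j, 0 < m j := by
    intro j
    apply Nat.pos_of_ne_zero
    rw [hm, Ne, Finset.lcm_eq_zero_iff]
    intro h0
    obtain ⟨i, -, hi⟩ := h0
    exact (hpos i j).ne' hi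
  have hcastdiv : ∀ i j, ((m j / h i j : ℕ) : ℚ) = (m j : ℚ) / (h i j : ℚ) :=
    fun i j => Nat.cast_div (hdvd i j) (by exact_mod_cast (hpos i j).ne')
  have hcolsum : ∀ (x : Fin J → ℕ) (j : Fin J),
      ∑ i, x j * (m j / h i j) * g i j = m j * x j := by
    intro x j
    have : ((∑ i, x j * (m j / h i j) * g i j : ℕ) : ℚ) = ((m j * x j : ℕ) : ℚ) := by
      push_cast
      have : ∀ i ∈ Finset.univ, (x j : ℚ) * ((m j / h i j : ℕ) : ℚ) * (g i j : ℚ)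
          = (x j : ℚ) * (m j : ℚ) * c i j := by
        intro i _; rw [hcastdiv i j, hc]; ring
      rw [Finset.sum_congr rfl this, ← Finset.mul_sum, hsum1, mul_one, mul_comm]
    exact_mod_cast this
  refine ⟨?_, ?_, ?_⟩
  · -- MapsTo
    rintro x ⟨hxpos, hxsum⟩
    refine ⟨fun i j => x j * (m j / h i j) * g i j, ?_, ?_, ?_, ?_⟩
    · intro j; rw [hcolsum x j]; exact Nat.mul_pos (hmpos j) (hxpos j)
    · rw [Finset.sum_congr rfl fun j _ => hcolsum x j]; exact hxsum
    · intro i j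
      rw [hcolsum x j, hc]
      push_cast [hcastdiv i j]
      field_simp
    · intro j; rw [hcolsum x j]
  · -- InjOn
    rintro x ⟨hxpos, -⟩ y ⟨hypos, -⟩ hxy
    funext j
    have := congrFun hxy j
    exact Nat.eq_of_mul_eq_mul_left (hmpos j) this
  · -- SurjOn
    rintro sm ⟨s, hspos, hssum, hsrat, hsm⟩
    have hmd : ∀ j, m j ∣ sm j := by
      intro j
      rw [hm]
      apply Finset.lcm_dvd
      intro i _
      have key : h i j * s i j = g i j * sm j := by
        have h1 := hsrat i j
        rw [hc] at h1
        rw [hsm j]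
        have hne : (h i j : ℚ) ≠ 0 := by exact_mod_cast (hpos i j).ne'
        have h2 : (h i j : ℚ) * (s i j : ℚ) = (g i j : ℚ) * ((∑ i', s i' j : ℕ) : ℚ) := by
          rw [h1]; field_simp
        exact_mod_cast h2
      have : h i j ∣ g i j * sm j := ⟨s i j, key.symm⟩
      exact (Nat.Coprime.dvd_of_dvd_mul_left ((hcop i j).symm) this)
    refine ⟨fun j => sm j / m j, ⟨?_, ?_⟩, ?_⟩
    · intro j
      apply Nat.div_pos (Nat.le_of_dvd ?_ (hmd j)) (hmpos j)
      rw [hsm j]; exact hspos j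
    · have : ∀ j, m j * (sm j / m j) = sm j := fun j => Nat.mul_div_cancel' (hmd j)
      rw [Finset.sum_congr rfl fun j _ => this j]
      rw [Finset.sum_congr rfl fun j _ => hsm j]
      exact hssum
    · funext j
      exact Nat.mul_div_cancel' (hmd j)
end

section
/- Suppose the fiber F_{A|B} of tables decomposes as a disjoint union of the fibers F_{AB}(p_1), …, F_{AB}(p_m) over the m distinct possible marginals. Then |F_{A|B}| = ∑_{i=1}^m |F_{AB}(p_i)|, and in particular |F_{A|B}| = ∑_{i=1}^m ∏_{a,b} C(s^{(i)}_{ab} + K − 1, K − 1), where s^{(i)} is the i-th possible [AB] margin. -/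
/-- The subtype of tuples with fixed sum is equivalent to `Sym (Fin K) n`. -/
noncomputable def symEquivTuple (K n : ℕ) :
    Sym (Fin K) n ≃ {f : Fin K → ℕ // ∑ k, f k = n} :=
  Equiv.subtypeEquiv (Multiset.toFinsupp.toEquiv.trans Finsupp.equivFunOnFinite) <| fun m => by
    have : ∀ k : Fin K, Finsupp.equivFunOnFinite (Multiset.toFinsupp m) k = m.count k := by
      intro k; simp
    rw [show (∑ k, (Multiset.toFinsupp.toEquiv.trans Finsupp.equivFunOnFinite) m k)
        = ∑ k, m.count k from Finset.sum_congr rfl (fun k _ => this k)]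
    rw [Multiset.sum_count_eq_card (s := Finset.univ) (fun a _ => Finset.mem_univ a)]

lemma aux_card (K n : ℕ) (hK : 0 < K) :
    Nat.card {f : Fin K → ℕ // ∑ k, f k = n} = (n + K - 1).choose (K - 1) := by
  rw [← Nat.card_congr (symEquivTuple K n), Nat.card_eq_fintype_card,
    Sym.card_sym_eq_choose, Fintype.card_fin]
  have h1 : K + n - 1 = n + (K - 1) := by omega
  have h2 : n + K - 1 = n + (K - 1) := by omega
  rw [h1, h2, Nat.choose_symm_add]

/-- The set of tables with prescribed row sums is equivalent to a product of tuple-sum types. -/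
noncomputable def tableEquiv (I J K : ℕ) (s : Fin I → Fin J → ℕ) :
    {t : Fin I → Fin J → Fin K → ℕ // ∀ a b, ∑ k, t a b k = s a b} ≃
      ∀ a : Fin I, ∀ b : Fin J, {f : Fin K → ℕ // ∑ k, f k = s a b} where
  toFun t a b := ⟨t.1 a b, t.2 a b⟩
  invFun g := ⟨fun a b => (g a b).1, fun a b => (g a b).2⟩
  left_inv t := rfl
  right_inv g := rfl

theorem stmt_8 (I J K m : ℕ) (hK : 0 < K)
    (F : Set (Fin I → Fin J → Fin K → ℕ))
    (s : Fin m → Fin I → Fin J → ℕ)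
    (P : Fin m → Set (Fin I → Fin J → Fin K → ℕ))
    (hP : ∀ i, P i = {t | ∀ a b, ∑ k, t a b k = s i a b})
    (hunion : F = ⋃ i, P i)
    (hdisj : ∀ i i', i ≠ i' → Disjoint (P i) (P i')) :
    Nat.card F = ∑ i, Nat.card (P i) ∧
    Nat.card F = ∑ i, ∏ a, ∏ b, (s i a b + K - 1).choose (K - 1) := by
  -- card of each fiber
  have hcard : ∀ i, Nat.card (P i) = ∏ a, ∏ b, (s i a b + K - 1).choose (K - 1) := by
    intro i
    have e : P i ≃ ∀ a : Fin I, ∀ b : Fin J, {f : Fin K → ℕ // ∑ k, f k = s i a b} := by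
      rw [hP i]; exact tableEquiv I J K (s i)
    rw [Nat.card_congr e, Nat.card_pi]
    refine Finset.prod_congr rfl fun a _ => ?_
    rw [Nat.card_pi]
    exact Finset.prod_congr rfl fun b _ => aux_card K (s i a b) hK
  -- finiteness of each fiber
  have hfin : ∀ i, Finite (P i) := by
    intro i
    have e : P i ≃ ∀ a : Fin I, ∀ b : Fin J, {f : Fin K → ℕ // ∑ k, f k = s i a b} := by
      rw [hP i]; exact tableEquiv I J K (s i)
    have : ∀ a b, Finite {f : Fin K → ℕ // ∑ k, f k = s i a b} := fun a b =>
      Finite.of_equiv _ (symEquivTuple K (s i a b))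
    exact Finite.of_equiv _ e.symm
  -- disjoint union
  have hpw : Pairwise (Function.onFun Disjoint P) := fun i i' h => hdisj i i' h
  have e2 : F ≃ Σ i, P i := by
    rw [hunion]; exact Set.unionEqSigmaOfDisjoint hpw
  have : ∀ i, Fintype (P i) := fun i => @Fintype.ofFinite _ (hfin i)
  have h1 : Nat.card F = ∑ i, Nat.card (P i) := by
    rw [Nat.card_congr e2, Nat.card_eq_fintype_card, Fintype.card_sigma]
    exact Finset.sum_congr rfl fun i _ => (Nat.card_eq_fintype_card).symm
  exact ⟨h1, h1.trans (Finset.sum_congr rfl fun i _ => hcard i)⟩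
end

section
/- The set F_{A|B} of nonnegative integer I×J×K arrays with total sum N, positive column (B) margins, and conditional frequencies c_{ij}, is the disjoint union over all positive integer solutions x of ∑_j m_j x_j = N of the sets F_{AB}(x) of arrays whose [AB]-margin equals (m_j x_j c_{ij})_{ij}. In particular, two arrays in F_{A|B} with different B-margins lie in different pieces of the union. -/
theorem stmt_9 (I J K N : ℕ) (hI : 0 < I) (hJ : 0 < J) (hK : 0 < K) (hN : 0 < N)
    (g h : Fin I → Fin J → ℕ)
    (hcop : ∀ i j, Nat.Coprime (g i j) (h i j))
    (hpos : ∀ i j, 0 < h i j)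
    (c : Fin I → Fin J → ℚ) (hc : ∀ i j, c i j = (g i j : ℚ) / (h i j : ℚ))
    (hsum1 : ∀ j, ∑ i, c i j = 1)
    (m : Fin J → ℕ) (hm : ∀ j, m j = Finset.univ.lcm (fun i => h i j))
    (FAB : (Fin J → ℕ) → Set (Fin I → Fin J → Fin K → ℕ))
    (hFAB : ∀ x, FAB x = {t | ∀ i j, ((∑ k, t i j k : ℕ) : ℚ) = (m j : ℚ) * (x j : ℚ) * c i j})
    (Sol : Set (Fin J → ℕ))
    (hSol : Sol = {x | (∀ j, 0 < x j) ∧ ∑ j, m j * x j = N}) :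
    {t : Fin I → Fin J → Fin K → ℕ |
        (∑ i, ∑ j, ∑ k, t i j k) = N ∧
        (∀ j, 0 < ∑ i, ∑ k, t i j k) ∧
        (∀ i j, ((∑ k, t i j k : ℕ) : ℚ) = c i j * ((∑ i', ∑ k, t i' j k : ℕ) : ℚ))}
      = (⋃ x ∈ Sol, FAB x) ∧
    (∀ x ∈ Sol, ∀ x' ∈ Sol, x ≠ x' → Disjoint (FAB x) (FAB x')) := by
  have hmpos : ∀ j, 0 < m j := by
    intro j
    rw [hm]
    rcases Nat.eq_zero_or_pos (Finset.univ.lcm fun i => h i j) with h0 | hp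
    · rw [Finset.lcm_eq_zero_iff] at h0
      obtain ⟨i, -, hi⟩ := h0
      exact absurd hi (hpos i j).ne'
    · exact hp
  have key : ∀ (x : Fin J → ℕ) (t : Fin I → Fin J → Fin K → ℕ),
      (∀ i j, ((∑ k, t i j k : ℕ) : ℚ) = (m j : ℚ) * (x j : ℚ) * c i j) →
      ∀ j, (∑ i, ∑ k, t i j k) = m j * x j := by
    intro x t ht j
    have : ((∑ i, ∑ k, t i j k : ℕ) : ℚ) = ((m j * x j : ℕ) : ℚ) := by
      rw [Nat.cast_sum]
      calc ∑ i, ((∑ k, t i j k : ℕ) : ℚ)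
          = ∑ i, (m j : ℚ) * (x j : ℚ) * c i j := Finset.sum_congr rfl fun i _ => ht i j
        _ = (m j : ℚ) * (x j : ℚ) * ∑ i, c i j := by rw [Finset.mul_sum]
        _ = ((m j * x j : ℕ) : ℚ) := by rw [hsum1, mul_one, Nat.cast_mul]
    exact_mod_cast this
  constructor
  · ext t
    simp only [Set.mem_setOf_eq, Set.mem_iUnion]
    constructor
    · rintro ⟨htot, hposj, hfreq⟩
      have hdvd : ∀ j, m j ∣ ∑ i, ∑ k, t i j k := by
        intro j
        rw [hm]
        apply Finset.lcm_dvd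
        intro i _
        have hthis := hfreq i j
        rw [hc] at hthis
        have hne : (h i j : ℚ) ≠ 0 := Nat.cast_ne_zero.mpr (hpos i j).ne'
        have h2q : ((∑ k, t i j k : ℕ) : ℚ) * (h i j : ℚ)
            = (g i j : ℚ) * ((∑ i', ∑ k, t i' j k : ℕ) : ℚ) := by
          rw [hthis, div_mul_eq_mul_div, div_mul_cancel₀ _ hne]
        have h3 : (∑ k, t i j k) * h i j = g i j * (∑ i', ∑ k, t i' j k) := by
          exact_mod_cast h2q
        have hd : h i j ∣ g i j * (∑ i', ∑ k, t i' j k) := ⟨∑ k, t i j k, by rw [← h3, mul_comm]⟩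
        exact (hcop i j).symm.dvd_of_dvd_mul_left hd
      refine ⟨fun j => (∑ i, ∑ k, t i j k) / m j, ?_, ?_⟩
      · rw [hSol]
        constructor
        · intro j
          exact Nat.div_pos (Nat.le_of_dvd (hposj j) (hdvd j)) (hmpos j)
        · rw [Finset.sum_congr rfl fun j _ => Nat.mul_div_cancel' (hdvd j), ← htot]
          exact (Finset.sum_comm).symm
      · rw [hFAB]
        intro i j
        have hms : m j * ((∑ i, ∑ k, t i j k) / m j) = ∑ i, ∑ k, t i j k :=
          Nat.mul_div_cancel' (hdvd j)
        have hcast : ((m j : ℚ)) * (((∑ i, ∑ k, t i j k) / m j : ℕ) : ℚ)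
            = ((∑ i, ∑ k, t i j k : ℕ) : ℚ) := by exact_mod_cast congrArg (Nat.cast (R := ℚ)) hms
        rw [hcast, hfreq i j]
        ring
    · rintro ⟨x, hx, hxt⟩
      rw [hSol] at hx
      rw [hFAB] at hxt
      have hsj := key x t hxt
      refine ⟨?_, ?_, ?_⟩
      · rw [Finset.sum_comm, Finset.sum_congr rfl fun j _ => hsj j]
        exact hx.2
      · intro j
        rw [hsj j]
        exact Nat.mul_pos (hmpos j) (hx.1 j)
      · intro i j
        rw [hxt i j, hsj j]
        push_cast
        ring
  · intro x hx x' hx' hne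
    rw [Set.disjoint_left]
    intro t ht ht'
    rw [hFAB] at ht ht'
    apply hne
    funext j
    have h1 := key x t ht j
    have h2 := key x' t ht' j
    exact Nat.eq_of_mul_eq_mul_left (hmpos j) (h1.symm.trans h2)
end

section
/- The fiber F_{A|B} (tables with total N, positive B-margins, and given conditional frequencies c_{ij}) equals the fiber F_{AB} (tables with the fixed margin s_{ij} = m_j x_j c_{ij}) if and only if the Diophantine equation ∑_{j=1}^J m_j x_j = N has exactly one solution in positive integers. -/
private lemma cast_row_aux (g h m x : ℕ) (hh : 0 < h) (hd : h ∣ m) :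
    ((x * (m / h) * g : ℕ) : ℚ) = (g : ℚ) / (h : ℚ) * ((m : ℚ) * (x : ℚ)) := by
  obtain ⟨q, rfl⟩ := hd
  rw [Nat.mul_div_cancel_left q hh]
  have hh' : (h : ℚ) ≠ 0 := Nat.cast_ne_zero.mpr hh.ne'
  push_cast
  field_simp

theorem stmt_10 (I J K N : ℕ) (hI : 0 < I) (hJ : 0 < J) (hK : 0 < K) (hN : 0 < N)
    (g h : Fin I → Fin J → ℕ)
    (hcop : ∀ i j, Nat.Coprime (g i j) (h i j))
    (hpos : ∀ i j, 0 < h i j)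
    (c : Fin I → Fin J → ℚ) (hc : ∀ i j, c i j = (g i j : ℚ) / (h i j : ℚ))
    (hsum1 : ∀ j, ∑ i, c i j = 1)
    (m : Fin J → ℕ) (hm : ∀ j, m j = Finset.univ.lcm (fun i => h i j))
    (x₀ : Fin J → ℕ) (hx₀pos : ∀ j, 0 < x₀ j) (hx₀ : ∑ j, m j * x₀ j = N) :
    ({t : Fin I → Fin J → Fin K → ℕ |
        (∑ i, ∑ j, ∑ k, t i j k) = N ∧
        (∀ j, 0 < ∑ i, ∑ k, t i j k) ∧
        (∀ i j, ((∑ k, t i j k : ℕ) : ℚ) = c i j * ((∑ i', ∑ k, t i' j k : ℕ) : ℚ))}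
      = {t : Fin I → Fin J → Fin K → ℕ |
          ∀ i j, ((∑ k, t i j k : ℕ) : ℚ) = (m j : ℚ) * (x₀ j : ℚ) * c i j})
    ↔ {x : Fin J → ℕ | (∀ j, 0 < x j) ∧ ∑ j, m j * x j = N} = {x₀} := by
  have hm0 : ∀ j, 0 < m j := by
    intro j
    rw [hm]
    rcases Nat.eq_zero_or_pos (Finset.univ.lcm fun i => h i j) with h0 | h0
    · rw [Finset.lcm_eq_zero_iff] at h0
      obtain ⟨i, -, hi⟩ := h0
      exact absurd hi (hpos i j).ne'
    · exact h0
  have hdvd : ∀ i j, h i j ∣ m j := fun i j => by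
    rw [hm]; exact Finset.dvd_lcm (Finset.mem_univ i)
  -- row value for the canonical table with column parameters x
  have hrow : ∀ (x : Fin J → ℕ) (i : Fin I) (j : Fin J),
      ((x j * (m j / h i j) * g i j : ℕ) : ℚ) = c i j * ((m j : ℚ) * (x j : ℚ)) := by
    intro x i j
    rw [hc]
    exact cast_row_aux (g i j) (h i j) (m j) (x j) (hpos i j) (hdvd i j)
  have hcol : ∀ (x : Fin J → ℕ) (j : Fin J),
      (∑ i, x j * (m j / h i j) * g i j) = m j * x j := by
    intro x j
    have : ((∑ i, x j * (m j / h i j) * g i j : ℕ) : ℚ) = ((m j * x j : ℕ) : ℚ) := by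
      push_cast [Nat.cast_sum]
      calc ∑ i, ((x j : ℚ) * ((m j / h i j : ℕ) : ℚ) * (g i j : ℚ))
          = ∑ i, c i j * ((m j : ℚ) * (x j : ℚ)) := by
            refine Finset.sum_congr rfl fun i _ => ?_
            have := hrow x i j
            push_cast at this
            exact this
        _ = (∑ i, c i j) * ((m j : ℚ) * (x j : ℚ)) := by rw [Finset.sum_mul]
        _ = (m j : ℚ) * (x j : ℚ) := by rw [hsum1 j, one_mul]
    exact_mod_cast this
  -- the canonical table
  set tab : (Fin J → ℕ) → Fin I → Fin J → Fin K → ℕ :=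
    fun x i j k => if k = ⟨0, hK⟩ then x j * (m j / h i j) * g i j else 0 with htab
  have htabrow : ∀ (x : Fin J → ℕ) (i : Fin I) (j : Fin J),
      ∑ k, tab x i j k = x j * (m j / h i j) * g i j := by
    intro x i j
    simp [htab]
  -- canonical table for a positive solution x lies in the first fiber
  have htabmem : ∀ x : Fin J → ℕ, (∀ j, 0 < x j) → (∑ j, m j * x j = N) →
      (∑ i, ∑ j, ∑ k, tab x i j k) = N ∧
      (∀ j, 0 < ∑ i, ∑ k, tab x i j k) ∧
      (∀ i j, ((∑ k, tab x i j k : ℕ) : ℚ)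
          = c i j * ((∑ i', ∑ k, tab x i' j k : ℕ) : ℚ)) := by
    intro x hx1 hx2
    have hcolsum : ∀ j, (∑ i, ∑ k, tab x i j k) = m j * x j := by
      intro j
      rw [Finset.sum_congr rfl fun i _ => htabrow x i j]
      exact hcol x j
    refine ⟨?_, ?_, ?_⟩
    · rw [Finset.sum_comm]
      calc (∑ j, ∑ i, ∑ k, tab x i j k) = ∑ j, m j * x j :=
            Finset.sum_congr rfl fun j _ => hcolsum j
        _ = N := hx2
    · intro j
      rw [hcolsum j]
      exact Nat.mul_pos (hm0 j) (hx1 j)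
    · intro i j
      rw [htabrow x i j, hcolsum j, hrow x i j]
      push_cast
      ring
  constructor
  · -- fibers equal → unique solution
    intro hEq
    ext x
    simp only [Set.mem_setOf_eq, Set.mem_singleton_iff]
    constructor
    · rintro ⟨hx1, hx2⟩
      have hmem := htabmem x hx1 hx2
      have h2 := (Set.ext_iff.mp hEq (tab x)).mp hmem
      funext j
      -- find i with c i j ≠ 0
      have : (∑ i, c i j) ≠ 0 := by rw [hsum1 j]; exact one_ne_zero
      obtain ⟨i, -, hci⟩ := Finset.exists_ne_zero_of_sum_ne_zero this
      have e1 := h2 i j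
      rw [htabrow x i j, hrow x i j] at e1
      have e2 : (m j : ℚ) * (x j : ℚ) = (m j : ℚ) * (x₀ j : ℚ) := by
        have := mul_left_cancel₀ hci (by linarith [e1] : c i j * ((m j : ℚ) * (x j : ℚ)) = c i j * ((m j : ℚ) * (x₀ j : ℚ)))
        exact this
      have e3 : m j * x j = m j * x₀ j := by exact_mod_cast e2
      exact Nat.eq_of_mul_eq_mul_left (hm0 j) e3
    · rintro rfl
      exact ⟨hx₀pos, hx₀⟩
  · -- unique solution → fibers equal
    intro hSol
    ext t
    simp only [Set.mem_setOf_eq]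
    constructor
    · rintro ⟨hT, hTpos, hTcond⟩
      intro i j
      -- column margins
      set n : Fin J → ℕ := fun j => ∑ i, ∑ k, t i j k with hn
      have hdvdn : ∀ j, m j ∣ n j := by
        intro j
        rw [hm]
        refine Finset.lcm_dvd fun i _ => ?_
        have e := hTcond i j
        rw [hc] at e
        have hne : (h i j : ℚ) ≠ 0 := Nat.cast_ne_zero.mpr (hpos i j).ne'
        have e2 : (h i j : ℚ) * ((∑ k, t i j k : ℕ) : ℚ) = (g i j : ℚ) * ((n j : ℕ) : ℚ) := by
          rw [e]; field_simp
          simp [hn, Nat.cast_sum]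
        have e3 : h i j * (∑ k, t i j k) = g i j * n j := by exact_mod_cast e2
        have hdd : h i j ∣ n j * g i j := by
          rw [mul_comm, ← e3]; exact Dvd.intro _ rfl
        exact (Nat.Coprime.dvd_of_dvd_mul_right (hcop i j).symm hdd)
      set x : Fin J → ℕ := fun j => n j / m j with hx
      have hnx : ∀ j, n j = m j * x j := fun j => (Nat.mul_div_cancel' (hdvdn j)).symm
      have hxsol : (∀ j, 0 < x j) ∧ ∑ j, m j * x j = N := by
        constructor
        · intro j
          have h5 : 0 < m j * x j := by rw [← hnx j]; exact hTpos j
          exact Nat.pos_of_mul_pos_left (by rwa [mul_comm] at h5)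
        · calc (∑ j, m j * x j) = ∑ j, n j := by
                exact Finset.sum_congr rfl fun j _ => (hnx j).symm
            _ = ∑ i, ∑ j, ∑ k, t i j k := Finset.sum_comm
            _ = N := hT
      have hxeq : x = x₀ := by
        have := (Set.ext_iff.mp hSol x).mp hxsol
        exact this
      have e := hTcond i j
      have : (n j : ℚ) = (m j : ℚ) * (x₀ j : ℚ) := by
        rw [hnx j, hxeq]; push_cast; ring
      rw [e, this]; ring
    · intro hT
      have hcolsum : ∀ j, (∑ i, ∑ k, t i j k) = m j * x₀ j := by
        intro j
        have : ((∑ i, ∑ k, t i j k : ℕ) : ℚ) = ((m j * x₀ j : ℕ) : ℚ) := by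
          rw [Nat.cast_sum]
          calc (∑ i, ((∑ k, t i j k : ℕ) : ℚ))
              = ∑ i, (m j : ℚ) * (x₀ j : ℚ) * c i j :=
                Finset.sum_congr rfl fun i _ => hT i j
            _ = (m j : ℚ) * (x₀ j : ℚ) * ∑ i, c i j := by rw [Finset.mul_sum]
            _ = ((m j * x₀ j : ℕ) : ℚ) := by rw [hsum1 j]; push_cast; ring
        exact_mod_cast this
      refine ⟨?_, ?_, ?_⟩
      · rw [Finset.sum_comm]
        calc (∑ j, ∑ i, ∑ k, t i j k) = ∑ j, m j * x₀ j :=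
              Finset.sum_congr rfl fun j _ => hcolsum j
          _ = N := hx₀
      · intro j
        rw [hcolsum j]
        exact Nat.mul_pos (hm0 j) (hx₀pos j)
      · intro i j
        rw [hT i j, hcolsum j]
        push_cast
        ring
end

section
/- Let m_1, …, m_J be positive integers. The number of positive integer solutions of ∑_j m_j x_j = N is at most N^{J−1}·gcd(m_1,…,m_J)/((J−1)!·∏_j m_j) · (1 + C/N)^{J−1} for some constant C depending only on m_1, …, m_J; in particular, the number of positive integer solutions is O(N^{J−1}) as N → ∞. -/
open Finset

/-- The solution set as a Finset. -/
def sols (J N : ℕ) (m : Fin J → ℕ) : Finset (Fin J → ℕ) :=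
  (Finset.Icc (fun _ => 1) (fun _ => N)).filter (fun x => ∑ j, m j * x j = N)

lemma mem_sols {J N : ℕ} {m : Fin J → ℕ} (hm : ∀ j, 0 < m j) {x : Fin J → ℕ} :
    x ∈ sols J N m ↔ (∀ j, 0 < x j) ∧ ∑ j, m j * x j = N := by
  simp only [sols, Finset.mem_filter, Finset.mem_Icc, Pi.le_def]
  constructor
  · rintro ⟨⟨h1, _⟩, h2⟩
    exact ⟨fun j => h1 j, h2⟩
  · rintro ⟨h1, h2⟩
    refine ⟨⟨fun j => h1 j, fun j => ?_⟩, h2⟩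
    calc x j ≤ m j * x j := Nat.le_mul_of_pos_left _ (hm j)
      _ ≤ ∑ i, m i * x i :=
        Finset.single_le_sum (f := fun i => m i * x i) (fun i _ => Nat.zero_le _)
          (Finset.mem_univ j)
      _ = N := h2

lemma ncard_eq (J N : ℕ) (m : Fin J → ℕ) (hm : ∀ j, 0 < m j) :
    Nat.card {x : Fin J → ℕ // (∀ j, 0 < x j) ∧ ∑ j, m j * x j = N} = (sols J N m).card := by
  rw [← Nat.card_eq_finsetCard]
  exact Nat.card_congr (Equiv.subtypeEquivRight fun x => (mem_sols hm).symm)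

lemma gcd_dvd_of_sols_nonempty {J N : ℕ} {m : Fin J → ℕ} (hm : ∀ j, 0 < m j)
    (h : (sols J N m).Nonempty) : Finset.univ.gcd m ∣ N := by
  obtain ⟨x, hx⟩ := h
  rw [mem_sols hm] at hx
  rw [← hx.2]
  exact Finset.dvd_sum fun j _ => Dvd.dvd.mul_right (Finset.gcd_dvd (Finset.mem_univ j)) _

/-- Counting recursion: split off the last variable. -/
lemma rec_le (J N : ℕ) (m : Fin (J + 1) → ℕ) (hm : ∀ j, 0 < m j) :
    (sols (J + 1) N m).card ≤
      ∑ k ∈ Finset.Icc 1 (N / m (Fin.last J)),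
        (sols J (N - m (Fin.last J) * k) (fun i => m i.castSucc)).card := by
  rw [← Finset.card_sigma]
  apply Finset.card_le_card_of_injOn (fun x => ⟨x (Fin.last J), Fin.init x⟩)
  · intro x hx
    rw [Finset.mem_coe, mem_sols hm] at hx
    obtain ⟨hpos, hsum⟩ := hx
    have hsplit : ∑ i : Fin J, m i.castSucc * x i.castSucc + m (Fin.last J) * x (Fin.last J) = N := by
      rw [Fin.sum_univ_castSucc (fun j => m j * x j)] at hsum; exact hsum
    have hle : m (Fin.last J) * x (Fin.last J) ≤ N := by omega
    rw [Finset.mem_coe, Finset.mem_sigma]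
    dsimp only
    constructor
    · rw [Finset.mem_Icc]
      refine ⟨hpos _, ?_⟩
      rw [Nat.le_div_iff_mul_le (hm (Fin.last J)), Nat.mul_comm]
      omega
    · rw [mem_sols (fun i => hm i.castSucc)]
      refine ⟨fun i => hpos _, ?_⟩
      simp only [Fin.init]
      omega
  · intro x hx y hy hxy
    rw [Sigma.ext_iff] at hxy
    have h1 : x (Fin.last J) = y (Fin.last J) := hxy.1
    have h2 : Fin.init x = Fin.init y := eq_of_heq hxy.2
    have h3 := Fin.snoc_init_self x
    rw [h1, h2, Fin.snoc_init_self y] at h3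
    exact h3.symm

/-- `(n+1) b^n (a-b) ≤ a^(n+1) - b^(n+1)` for `0 ≤ b ≤ a`. -/
lemma pow_gap (n : ℕ) {a b : ℝ} (hb : 0 ≤ b) (hab : b ≤ a) :
    ((n : ℝ) + 1) * b ^ n * (a - b) ≤ a ^ (n + 1) - b ^ (n + 1) := by
  induction n with
  | zero => simp
  | succ n ih =>
    have ha : 0 ≤ a := le_trans hb hab
    have hbn : b ^ n ≤ a ^ n := pow_le_pow_left₀ hb hab n
    have h1 : a * (((n : ℝ) + 1) * b ^ n * (a - b)) ≤ a * (a ^ (n + 1) - b ^ (n + 1)) :=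
      mul_le_mul_of_nonneg_left ih ha
    have e1 : a * (a ^ (n + 1) - b ^ (n + 1)) = a ^ (n + 1 + 1) - a * b ^ (n + 1) := by ring
    have h1' : a * (((n : ℝ) + 1) * b ^ n * (a - b)) ≤ a ^ (n + 1 + 1) - a * b ^ (n + 1) := by
      rw [← e1]; exact h1
    have hbb : b ^ (n + 1) ≤ a * b ^ n := by
      calc b ^ (n + 1) = b * b ^ n := by ring
        _ ≤ a * b ^ n := mul_le_mul_of_nonneg_right hab (pow_nonneg hb n)
    have h4 : ((n : ℝ) + 1) * b ^ (n + 1) * (a - b) ≤ ((n : ℝ) + 1) * (a * b ^ n) * (a - b) :=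
      mul_le_mul_of_nonneg_right (mul_le_mul_of_nonneg_left hbb (by positivity)) (by linarith)
    have e2 : b ^ (n + 1) * (a - b) = a * b ^ (n + 1) - b ^ (n + 1 + 1) := by ring
    push_cast
    nlinarith [h1', h4, e2]

/-- Riemann-sum style bound for a decreasing arithmetic sequence of powers. -/
lemma sum_bound (j n : ℕ) (B L : ℝ) (hL : 0 < L) (hB : 0 ≤ B)
    (hnonneg : ∀ i : ℕ, i < n → 0 ≤ B - L * i) :
    ∑ i ∈ Finset.range n, (B - L * i) ^ j ≤ (B + L) ^ (j + 1) / (((j : ℝ) + 1) * L) := by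
  rw [le_div_iff₀ (by positivity)]
  calc (∑ i ∈ Finset.range n, (B - L * i) ^ j) * (((j : ℝ) + 1) * L)
      = ∑ i ∈ Finset.range n, ((j : ℝ) + 1) * (B - L * i) ^ j * L := by
        rw [Finset.sum_mul]; congr 1; ext i; ring
    _ ≤ ∑ i ∈ Finset.range n, ((B + L - L * i) ^ (j+1) - (B + L - L * (i+1)) ^ (j+1)) := by
        apply Finset.sum_le_sum
        intro i hi
        have h := pow_gap j (hnonneg i (Finset.mem_range.mp hi))
          (show (B - L*i : ℝ) ≤ B + L - L*i by linarith)
        have e1 : (B + L - L * i) - (B - L * i) = L := by ring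
        have e2 : B + L - L * (i+1) = B - L * i := by push_cast; ring
        rw [e2]
        calc ((j:ℝ)+1) * (B - L*i)^j * L = ((j:ℝ)+1) * (B - L*i)^j * ((B + L - L*i) - (B - L*i)) := by
              rw [e1]
          _ ≤ (B + L - L*i)^(j+1) - (B - L*i)^(j+1) := h
    _ = (B + L) ^ (j+1) - (B + L - L * n) ^ (j+1) := by
        have h := Finset.sum_range_sub' (fun i : ℕ => (B + L - L * i) ^ (j+1)) n
        simp only [Nat.cast_zero, mul_zero, sub_zero] at h
        rw [← h]
        apply Finset.sum_congr rfl
        intro i _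
        push_cast
        ring_nf
    _ ≤ (B + L) ^ (j + 1) := by
        have hfn : 0 ≤ (B + L - L * n) ^ (j+1) := by
          rcases Nat.eq_zero_or_pos n with h | h
          · subst h
            apply pow_nonneg
            push_cast
            linarith
          · apply pow_nonneg
            have hc : ((n:ℝ) - 1) = ((n-1 : ℕ) : ℝ) := by
              have h1 : (1:ℕ) ≤ n := h
              push_cast [Nat.cast_sub h1]
              ring
            have he : B + L - L * n = B - L * ((n:ℝ) - 1) := by ring
            rw [he, hc]
            exact hnonneg (n-1) (by omega)
        linarith

lemma key (j : ℕ) : ∀ (m : Fin (j + 1) → ℕ), (∀ i, 0 < m i) →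
    ∃ C : ℝ, 0 ≤ C ∧ ∀ N : ℕ,
      ((sols (j + 1) N m).card : ℝ) ≤
        ((N : ℝ) + C) ^ j * (Finset.univ.gcd m : ℕ) /
          ((Nat.factorial j : ℝ) * ∏ i, (m i : ℝ)) := by
  induction j with
  | zero =>
    intro m hm
    refine ⟨0, le_refl _, fun N => ?_⟩
    have hcard : (sols 1 N m).card ≤ 1 := by
      rw [Finset.card_le_one]
      intro a ha b hb
      rw [mem_sols hm] at ha hb
      have ha' := ha.2; have hb' := hb.2
      simp only [Fin.sum_univ_succ, Fin.sum_univ_zero, add_zero] at ha' hb'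
      funext i
      have : i = 0 := Subsingleton.elim _ _
      subst this
      exact Nat.eq_of_mul_eq_mul_left (hm 0) (ha'.trans hb'.symm)
    have hg : Finset.univ.gcd m = m 0 := by
      have huniv : (Finset.univ : Finset (Fin (0+1))) = {0} := by decide
      rw [huniv, Finset.gcd_singleton]
      simp
    have hm0 : (0:ℝ) < m 0 := by exact_mod_cast hm 0
    rw [hg]
    simp only [pow_zero, one_mul, Nat.factorial_zero, Nat.cast_one, Fin.prod_univ_succ,
      Fin.prod_univ_zero, mul_one]
    rw [div_self (ne_of_gt hm0)]
    exact_mod_cast hcard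
  | succ j IH =>
    intro m hm
    set m' : Fin (j + 1) → ℕ := fun i => m i.castSucc with hm'def
    have hm' : ∀ i, 0 < m' i := fun i => hm i.castSucc
    set mL : ℕ := m (Fin.last (j + 1)) with hmLdef
    have hmL : 0 < mL := hm _
    set g' : ℕ := Finset.univ.gcd m' with hg'def
    have hg' : 0 < g' := by
      rw [Nat.pos_iff_ne_zero]
      intro h
      rw [hg'def, Finset.gcd_eq_zero_iff] at h
      exact (hm' 0).ne' (h 0 (Finset.mem_univ 0))
    set g : ℕ := Nat.gcd g' mL with hgdef
    have hg : 0 < g := Nat.gcd_pos_of_pos_right _ hmL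
    have hgg' : g ∣ g' := Nat.gcd_dvd_left _ _
    set d : ℕ := g' / g with hddef
    have hgd : g * d = g' := Nat.mul_div_cancel' hgg'
    have hd : 0 < d := by
      rcases Nat.eq_zero_or_pos d with h | h
      · rw [h, mul_zero] at hgd; omega
      · exact h
    -- g is the gcd of all of m
    have hgcd_eq : Finset.univ.gcd m = g := by
      apply Nat.dvd_antisymm
      · apply Nat.dvd_gcd
        · apply Finset.dvd_gcd
          intro b _
          exact Finset.gcd_dvd (Finset.mem_univ b.castSucc)
        · exact Finset.gcd_dvd (Finset.mem_univ _)
      · apply Finset.dvd_gcd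
        intro b _
        rcases Fin.eq_castSucc_or_eq_last b with ⟨i, rfl⟩ | rfl
        · exact (Nat.gcd_dvd_left g' mL).trans (Finset.gcd_dvd (Finset.mem_univ i))
        · exact Nat.gcd_dvd_right g' mL
    obtain ⟨C', hC'0, hC'⟩ := IH m' hm'
    set L : ℕ := mL * d with hLdef
    have hL : 0 < L := Nat.mul_pos hmL hd
    refine ⟨C' + L, by positivity, fun N => ?_⟩
    set P' : ℝ := ∏ i, (m' i : ℝ) with hP'def
    have hP'pos : 0 < P' := Finset.prod_pos fun i _ => by exact_mod_cast hm' i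
    have hfacpos : (0:ℝ) < (Nat.factorial j : ℝ) := by exact_mod_cast j.factorial_pos
    have hProd : ∏ i, (m i : ℝ) = P' * mL := by
      rw [hP'def, Fin.prod_univ_castSucc (fun i => (m i : ℝ))]
    -- main case split
    rcases lt_or_ge N mL with hNlt | hNge
    · -- N < mL : no solutions
      have hK : N / mL = 0 := Nat.div_eq_of_lt hNlt
      have h0 : (sols (j + 2) N m).card = 0 := by
        have := rec_le (j+1) N m hm
        rw [hK] at this
        simpa using this
      rw [h0]
      have : (0:ℝ) ≤ ((N : ℝ) + (C' + L)) ^ (j+1) * (Finset.univ.gcd m : ℕ) /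
          ((Nat.factorial (j+1) : ℝ) * ∏ i, (m i : ℝ)) := by
        apply div_nonneg
        · apply mul_nonneg
          · apply pow_nonneg; positivity
          · positivity
        · apply mul_nonneg (by positivity)
          exact le_of_lt (by rw [hProd]; positivity)
      exact_mod_cast this
    · -- mL ≤ N
      set K : ℕ := N / mL with hKdef
      set A : Finset ℕ := (Finset.Icc 1 K).filter (fun k => g' ∣ (N - mL * k)) with hAdef
      have hmem : ∀ k ∈ A, 1 ≤ k ∧ mL * k ≤ N := by
        intro k hk
        rw [hAdef, Finset.mem_filter, Finset.mem_Icc] at hk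
        refine ⟨hk.1.1, ?_⟩
        have h2 := hk.1.2
        rw [hKdef, Nat.le_div_iff_mul_le hmL] at h2
        rw [Nat.mul_comm]
        exact h2
      set φ : ℕ → ℕ := fun k => (k - 1) / d with hφdef
      have hφinj : Set.InjOn φ A := by
        intro k1 hk1 k2 hk2 heq
        simp only [Finset.coe_filter, Set.mem_setOf_eq, hAdef] at hk1 hk2
        have h1 := hmem k1 (by rw [hAdef]; exact Finset.mem_filter.mpr ⟨hk1.1, hk1.2⟩)
        have h2 := hmem k2 (by rw [hAdef]; exact Finset.mem_filter.mpr ⟨hk2.1, hk2.2⟩)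
        have hd1 := hk1.2
        have hd2 := hk2.2
        -- wlog k1 ≤ k2
        have key2 : ∀ a b : ℕ, 1 ≤ a → mL * a ≤ N → 1 ≤ b → mL * b ≤ N →
            g' ∣ N - mL * a → g' ∣ N - mL * b → a ≤ b → φ a = φ b → a = b := by
          intro a b ha1 haN hb1 hbN hda hdb hab hphieq
          obtain ⟨t0, hab'⟩ := Nat.le.dest hab
          have hdvd : g' ∣ mL * (b - a) := by
            have hba : b - a = t0 := by omega
            rw [hba]
            have hsplit : mL * b = mL * a + mL * t0 := by rw [← hab', Nat.mul_add]
            have heq2 : N - mL * a - (N - mL * b) = mL * t0 := by omega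
            rw [← heq2]
            exact Nat.dvd_sub hda hdb
          -- d ∣ (b - a)
          have hddvd : d ∣ (b - a) := by
            have hcop : Nat.Coprime d (mL / g) := by
              have := Nat.coprime_div_gcd_div_gcd (m := g') (n := mL) hg
              rwa [← hgdef, ← hddef] at this
            have hgmL : g ∣ mL := Nat.gcd_dvd_right _ _
            obtain ⟨e, he⟩ := hgmL
            have hdvd' : g * d ∣ g * e * (b - a) := by rw [hgd, ← he]; exact hdvd
            have : d ∣ e * (b - a) := by
              rcases hdvd' with ⟨c, hc⟩
              refine ⟨c, ?_⟩
              have : g * (d * c) = g * (e * (b-a)) := by rw [← mul_assoc, ← hc]; ring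
              exact (Nat.eq_of_mul_eq_mul_left hg this).symm
            have hcop' : Nat.Coprime d e := by
              have he' : e = mL / g := by rw [he, Nat.mul_div_cancel_left e hg]
              rwa [← he'] at hcop
            exact (Nat.Coprime.dvd_of_dvd_mul_left hcop' this)
          obtain ⟨t, ht⟩ := hddvd
          have hsub : b - 1 = (a - 1) + d * t := by omega
          have hphiab : φ b = φ a + t := by
            rw [hφdef]
            simp only
            rw [hsub, Nat.add_mul_div_left _ _ hd]
          have htz : t = 0 := by omega
          rw [htz, Nat.mul_zero] at ht
          omega
        rcases le_total k1 k2 with h | h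
        · exact key2 k1 k2 h1.1 h1.2 h2.1 h2.2 hd1 hd2 h heq
        · exact (key2 k2 k1 h2.1 h2.2 h1.1 h1.2 hd2 hd1 h heq.symm).symm
      set B : ℝ := (N : ℝ) + C' - mL with hBdef
      have hBnn : 0 ≤ B := by
        rw [hBdef]
        have : (mL : ℝ) ≤ N := by exact_mod_cast hNge
        linarith
      set n0 : ℕ := (N - mL) / L + 1 with hn0def
      have hc : (0:ℝ) ≤ (g' : ℝ) / ((Nat.factorial j : ℝ) * P') := by positivity
      -- the chain
      have chain1 : ((sols (j + 2) N m).card : ℝ) ≤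
          ∑ k ∈ A, ((sols (j+1) (N - mL * k) m').card : ℝ) := by
        have h1 : (sols (j+1+1) N m).card ≤
            ∑ k ∈ Finset.Icc 1 K, (sols (j+1) (N - mL * k) m').card := rec_le (j+1) N m hm
        have h2 : ∑ k ∈ Finset.Icc 1 K, (sols (j+1) (N - mL * k) m').card
            = ∑ k ∈ A, (sols (j+1) (N - mL * k) m').card := by
          rw [hAdef]
          rw [Finset.sum_filter_of_ne]
          intro k _ hne
          apply gcd_dvd_of_sols_nonempty hm'
          rwa [Finset.card_ne_zero] at hne
        rw [h2] at h1
        exact_mod_cast h1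
      have chain2 : ∀ k ∈ A, ((sols (j+1) (N - mL * k) m').card : ℝ) ≤
          (B - L * φ k) ^ j * ((g' : ℝ) / ((Nat.factorial j : ℝ) * P')) := by
        intro k hk
        obtain ⟨hk1, hkN⟩ := hmem k hk
        have step1 := hC' (N - mL * k)
        have hcast : ((N - mL * k : ℕ) : ℝ) = (N : ℝ) - mL * k := by
          push_cast [Nat.cast_sub hkN]; ring
        have hphik : mL + L * φ k ≤ mL * k := by
          have h1 : d * φ k ≤ k - 1 := by
            rw [hφdef]
            calc d * ((k-1)/d) = (k-1)/d * d := Nat.mul_comm _ _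
              _ ≤ k - 1 := Nat.div_mul_le_self _ _
          have h2 : mL * (1 + d * φ k) ≤ mL * k := by
            apply Nat.mul_le_mul_left
            omega
          calc mL + L * φ k = mL * (1 + d * φ k) := by rw [hLdef]; ring
            _ ≤ mL * k := h2
        have hbase1 : (0:ℝ) ≤ (N : ℝ) - mL * k + C' := by
          have : (mL * k : ℝ) ≤ N := by exact_mod_cast hkN
          push_cast at this ⊢
          linarith
        have hbase2 : (N : ℝ) - mL * k + C' ≤ B - L * φ k := by
          rw [hBdef]
          have : (mL : ℝ) + L * φ k ≤ mL * k := by exact_mod_cast hphik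
          push_cast at this ⊢
          linarith
        calc ((sols (j+1) (N - mL * k) m').card : ℝ)
            ≤ (((N - mL * k : ℕ) : ℝ) + C') ^ j * (Finset.univ.gcd m' : ℕ) /
              ((Nat.factorial j : ℝ) * ∏ i, (m' i : ℝ)) := step1
          _ = ((N : ℝ) - mL * k + C') ^ j * ((g' : ℝ) / ((Nat.factorial j : ℝ) * P')) := by
              rw [hcast, ← hg'def, ← hP'def]; ring
          _ ≤ (B - L * φ k) ^ j * ((g' : ℝ) / ((Nat.factorial j : ℝ) * P')) := by
              apply mul_le_mul_of_nonneg_right _ hc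
              exact pow_le_pow_left₀ hbase1 hbase2 j
      have chain3 : ∑ k ∈ A, (B - L * φ k) ^ j * ((g' : ℝ) / ((Nat.factorial j : ℝ) * P'))
          = ∑ i ∈ A.image φ, (B - L * i) ^ j * ((g' : ℝ) / ((Nat.factorial j : ℝ) * P')) := by
        rw [Finset.sum_image (fun x hx y hy h => hφinj hx hy h)]
      have himage : A.image φ ⊆ Finset.range n0 := by
        intro i hi
        rw [Finset.mem_image] at hi
        obtain ⟨k, hk, rfl⟩ := hi
        obtain ⟨hk1, hkN⟩ := hmem k hk
        rw [Finset.mem_range, hn0def]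
        have h1 : d * φ k ≤ k - 1 := by
          rw [hφdef]
          calc d * ((k-1)/d) = (k-1)/d * d := Nat.mul_comm _ _
            _ ≤ k - 1 := Nat.div_mul_le_self _ _
        have h2 : L * φ k ≤ N - mL := by
          have : mL * (d * φ k) ≤ mL * (k - 1) := Nat.mul_le_mul_left _ h1
          have h3 : mL * (k-1) ≤ N - mL := by
            have h4 : mL * k ≤ N := hkN
            have hker : mL * (k-1) + mL = mL * k := by
              conv_rhs => rw [← Nat.sub_add_cancel hk1]
              rw [Nat.mul_add, Nat.mul_one]
            omega
          calc L * φ k = mL * (d * φ k) := by rw [hLdef]; ring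
            _ ≤ mL * (k-1) := ‹mL * (d * φ k) ≤ mL * (k-1)›
            _ ≤ N - mL := h3
        have : φ k ≤ (N - mL) / L := by
          rw [Nat.le_div_iff_mul_le hL, Nat.mul_comm]
          exact h2
        omega
      have hnonneg0 : ∀ i : ℕ, i < n0 → (0:ℝ) ≤ B - L * i := by
        intro i hi
        have hiL : L * i ≤ N - mL := by
          have : i ≤ (N - mL) / L := by omega
          calc L * i ≤ L * ((N - mL)/L) := Nat.mul_le_mul_left _ this
            _ ≤ N - mL := Nat.mul_div_le _ _
        have : ((L * i : ℕ) : ℝ) ≤ ((N - mL : ℕ) : ℝ) := by exact_mod_cast hiL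
        rw [Nat.cast_sub hNge] at this
        push_cast at this
        rw [hBdef]
        linarith
      have chain4 : ∑ i ∈ A.image φ, (B - L * i) ^ j * ((g' : ℝ) / ((Nat.factorial j : ℝ) * P'))
          ≤ ∑ i ∈ Finset.range n0, (B - L * i) ^ j * ((g' : ℝ) / ((Nat.factorial j : ℝ) * P')) := by
        apply Finset.sum_le_sum_of_subset_of_nonneg himage
        intro i hi _
        apply mul_nonneg _ hc
        apply pow_nonneg
        exact hnonneg0 i (Finset.mem_range.mp hi)
      have chain5 : ∑ i ∈ Finset.range n0, (B - L * i) ^ j * ((g' : ℝ) / ((Nat.factorial j : ℝ) * P'))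
          ≤ (B + L) ^ (j+1) / (((j:ℝ)+1) * L) * ((g' : ℝ) / ((Nat.factorial j : ℝ) * P')) := by
        rw [← Finset.sum_mul]
        apply mul_le_mul_of_nonneg_right _ hc
        exact sum_bound j n0 B L (by exact_mod_cast hL) hBnn hnonneg0
      -- final arithmetic
      have hBL : B + L ≤ (N:ℝ) + (C' + L) := by
        rw [hBdef]
        have : (0:ℝ) ≤ mL := by positivity
        linarith
      have hBLnn : (0:ℝ) ≤ B + L := by
        have : (0:ℝ) < L := by exact_mod_cast hL
        linarith
      have hLpos : (0:ℝ) < L := by exact_mod_cast hL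
      have chain6 : (B + L) ^ (j+1) / (((j:ℝ)+1) * L) * ((g' : ℝ) / ((Nat.factorial j : ℝ) * P'))
          ≤ ((N:ℝ) + (C' + L)) ^ (j+1) / (((j:ℝ)+1) * L) * ((g' : ℝ) / ((Nat.factorial j : ℝ) * P')) := by
        gcongr
      have harith : ((N:ℝ) + (C' + L)) ^ (j+1) / (((j:ℝ)+1) * L) * ((g' : ℝ) / ((Nat.factorial j : ℝ) * P'))
          = ((N : ℝ) + (C' + L)) ^ (j+1) * ((Finset.univ.gcd m : ℕ) : ℝ) /
            ((Nat.factorial (j+1) : ℝ) * ∏ i, (m i : ℝ)) := by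
        rw [hgcd_eq, hProd, Nat.factorial_succ]
        have e1 : (g' : ℝ) = (g : ℝ) * d := by exact_mod_cast hgd.symm
        have e2 : (L : ℝ) = (mL : ℝ) * d := by rw [hLdef]; push_cast; ring
        have hd' : (0:ℝ) < (d:ℝ) := by exact_mod_cast hd
        have hmL' : (0:ℝ) < (mL:ℝ) := by exact_mod_cast hmL
        rw [e1, e2]
        push_cast
        field_simp
      calc ((sols (j + 1 + 1) N m).card : ℝ)
          ≤ ∑ k ∈ A, ((sols (j+1) (N - mL * k) m').card : ℝ) := chain1
        _ ≤ ∑ k ∈ A, (B - L * φ k) ^ j * ((g' : ℝ) / ((Nat.factorial j : ℝ) * P')) :=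
            Finset.sum_le_sum chain2
        _ = ∑ i ∈ A.image φ, (B - L * i) ^ j * ((g' : ℝ) / ((Nat.factorial j : ℝ) * P')) := chain3
        _ ≤ ∑ i ∈ Finset.range n0, (B - L * i) ^ j * ((g' : ℝ) / ((Nat.factorial j : ℝ) * P')) := chain4
        _ ≤ (B + L) ^ (j+1) / (((j:ℝ)+1) * L) * ((g' : ℝ) / ((Nat.factorial j : ℝ) * P')) := chain5
        _ ≤ ((N:ℝ) + (C' + L)) ^ (j+1) / (((j:ℝ)+1) * L) * ((g' : ℝ) / ((Nat.factorial j : ℝ) * P')) := chain6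
        _ = _ := harith

theorem stmt_14 (J : ℕ) (hJ : 0 < J) (m : Fin J → ℕ) (hm : ∀ j, 0 < m j) :
    ∃ C : ℝ, 0 ≤ C ∧ ∀ N : ℕ, 0 < N →
      (Nat.card {x : Fin J → ℕ // (∀ j, 0 < x j) ∧ ∑ j, m j * x j = N} : ℝ) ≤
        (N : ℝ) ^ (J - 1) * ((Finset.univ.gcd m : ℕ) : ℝ) /
          ((Nat.factorial (J - 1) : ℝ) * ∏ j, (m j : ℝ)) * (1 + C / N) ^ (J - 1) := by
  obtain ⟨j, rfl⟩ : ∃ j, J = j + 1 := ⟨J - 1, (Nat.succ_pred_eq_of_pos hJ).symm⟩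
  obtain ⟨C, hC0, hC⟩ := key j m hm
  refine ⟨C, hC0, fun N hN => ?_⟩
  rw [ncard_eq _ _ _ hm]
  simp only [Nat.add_sub_cancel]
  have hNpos : (0:ℝ) < N := by exact_mod_cast hN
  have hpow : (N:ℝ)^j * (1 + C/N)^j = ((N:ℝ) + C)^j := by
    rw [← mul_pow]
    congr 1
    field_simp
  calc ((sols (j+1) N m).card : ℝ)
      ≤ ((N : ℝ) + C) ^ j * (Finset.univ.gcd m : ℕ) /
          ((Nat.factorial j : ℝ) * ∏ i, (m i : ℝ)) := hC N
    _ = (N : ℝ) ^ j * ((Finset.univ.gcd m : ℕ) : ℝ) /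
          ((Nat.factorial j : ℝ) * ∏ i, (m i : ℝ)) * (1 + C / N) ^ j := by
        rw [← hpow]; ring
end

section
/- Let a, b, N be positive integers with gcd(a,b) = 1. The number of nonnegative integer solutions (x, y) of a·x + b·y = N is either ⌊N/(ab)⌋ or ⌊N/(ab)⌋ + 1. -/
/-- Division arithmetic helper. -/
lemma aux_div (m N t : ℕ) (hm : 0 < m) (ht : t < m) (htN : t ≤ N) :
    (N - t) / m + 1 = N / m ∨ (N - t) / m + 1 = N / m + 1 := by
  have h1 : (N - t) / m ≤ N / m := Nat.div_le_div_right (Nat.sub_le _ _)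
  have h2 : N / m ≤ (N - t) / m + 1 := by
    have hle : N ≤ (N - t) + m := by omega
    calc N / m ≤ ((N - t) + m) / m := Nat.div_le_div_right hle
      _ = (N - t) / m + 1 := Nat.add_div_right _ hm
  omega

theorem stmt_15 (a b N : ℕ) (ha : 0 < a) (hb : 0 < b) (hN : 0 < N)
    (hcop : Nat.gcd a b = 1) :
    Nat.card {p : ℕ × ℕ // a * p.1 + b * p.2 = N} = N / (a * b) ∨
    Nat.card {p : ℕ × ℕ // a * p.1 + b * p.2 = N} = N / (a * b) + 1 := by
  haveI : NeZero b := ⟨hb.ne'⟩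
  classical
  set x0 : ℕ := ((N : ZMod b) * (a : ZMod b)⁻¹).val with hx0def
  have hx0lt : x0 < b := ZMod.val_lt _
  have hx0ab : a * x0 + a ≤ a * b := by
    have h := Nat.mul_le_mul_left a (Nat.succ_le_of_lt hx0lt)
    rw [Nat.mul_succ] at h
    omega
  have hu : IsUnit (a : ZMod b) := (ZMod.isUnit_iff_coprime a b).mpr hcop
  have hmod : a * x0 ≡ N [MOD b] := by
    have : ((a * x0 : ℕ) : ZMod b) = ((N : ℕ) : ZMod b) := by
      push_cast
      rw [hx0def, ZMod.natCast_val, ZMod.cast_id]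
      rw [mul_comm (a : ZMod b) _, mul_assoc, ZMod.inv_mul_of_unit _ hu, mul_one]
    exact (ZMod.natCast_eq_natCast_iff _ _ _).mp this
  -- any solution x satisfies x ≡ x0 mod b
  have hcongr : ∀ x : ℕ, a * x ≡ N [MOD b] → x % b = x0 := by
    intro x hx
    have h1 : a * x ≡ a * x0 [MOD b] := hx.trans hmod.symm
    have h2 : x ≡ x0 [MOD b] := Nat.ModEq.cancel_left_of_coprime (Nat.coprime_comm.mp hcop) h1
    have h3 := h2.symm
    unfold Nat.ModEq at h3
    rw [Nat.mod_eq_of_lt hx0lt] at h3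
    exact h3.symm
  set K : ℕ := if a * x0 ≤ N then (N - a * x0) / (a * b) + 1 else 0 with hK
  set f : ℕ → ℕ × ℕ := fun k => (x0 + b * k, (N - a * (x0 + b * k)) / b) with hf
  have hset : {p : ℕ × ℕ | a * p.1 + b * p.2 = N} = f '' ↑(Finset.range K) := by
    ext p
    simp only [Set.mem_setOf_eq, Set.mem_image, Finset.coe_range, Set.mem_Iio]
    constructor
    · rintro hp
      have hax : a * p.1 ≤ N := by omega
      have hmx : a * p.1 ≡ N [MOD b] :=
        (Nat.modEq_iff_dvd' hax).mpr ⟨p.2, by omega⟩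
      have hx0le : x0 = p.1 % b := (hcongr p.1 hmx).symm
      have hx0p : x0 ≤ p.1 := hx0le ▸ Nat.mod_le _ _
      have hdm := Nat.div_add_mod p.1 b
      have hdvd : b ∣ p.1 - x0 := ⟨p.1 / b, by omega⟩
      obtain ⟨k, hk⟩ := hdvd
      have hx1 : x0 + b * k = p.1 := by omega
      have hexp : a * (x0 + b * k) = a * x0 + a * b * k := by ring
      have hble : a * (x0 + b * k) ≤ N := by rw [hx1]; exact hax
      have hx0N : a * x0 ≤ N := by omega
      refine ⟨k, ?_, ?_⟩
      · rw [hK, if_pos hx0N]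
        have h1 : a * b * k ≤ N - a * x0 := by omega
        have h2 : k ≤ (N - a * x0) / (a * b) :=
          (Nat.le_div_iff_mul_le (Nat.mul_pos ha hb)).mpr (by rw [mul_comm]; exact h1)
        omega
      · rw [hf]
        simp only
        rw [hx1]
        have h2 : (N - a * p.1) / b = p.2 := by
          have hb2 : b * p.2 = N - a * p.1 := by omega
          rw [← hb2, Nat.mul_div_cancel_left _ hb]
        rw [h2]
    · rintro ⟨k, hkK, rfl⟩
      have hKpos : 0 < K := Nat.pos_of_ne_zero (by omega)
      have hx0N : a * x0 ≤ N := by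
        by_contra h
        rw [hK, if_neg h] at hKpos
        omega
      have hkle : k ≤ (N - a * x0) / (a * b) := by
        rw [hK, if_pos hx0N] at hkK
        omega
      have hexp : a * (x0 + b * k) = a * x0 + a * b * k := by ring
      have hble : a * (x0 + b * k) ≤ N := by
        have h3 : a * b * ((N - a * x0) / (a * b)) ≤ N - a * x0 := by
          rw [mul_comm]; exact Nat.div_mul_le_self _ _
        have h4 : a * b * k ≤ a * b * ((N - a * x0) / (a * b)) :=
          Nat.mul_le_mul_left _ hkle
        omega
      have hmx : a * (x0 + b * k) ≡ N [MOD b] := by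
        have hz : a * b * k ≡ 0 [MOD b] := Nat.modEq_zero_iff_dvd.mpr ⟨a * k, by ring⟩
        have h5 : a * x0 + a * b * k ≡ a * x0 + 0 [MOD b] := Nat.ModEq.add_left _ hz
        rw [hexp]
        simpa using h5.trans (by simpa using hmod)
      have hdvd : b ∣ N - a * (x0 + b * k) := (Nat.modEq_iff_dvd' hble).mp hmx
      simp only [hf]
      rw [Nat.mul_div_cancel' hdvd]
      omega
  have hinj : Set.InjOn f ↑(Finset.range K) := by
    intro x _ y _ hxy
    simp only [hf, Prod.mk.injEq] at hxy
    have h1 : b * x = b * y := by omega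
    exact Nat.eq_of_mul_eq_mul_left hb h1
  have hcard : Nat.card {p : ℕ × ℕ // a * p.1 + b * p.2 = N} = K := by
    have e1 : Nat.card {p : ℕ × ℕ // a * p.1 + b * p.2 = N}
        = Set.ncard {p : ℕ × ℕ | a * p.1 + b * p.2 = N} := rfl
    rw [e1, hset, Set.ncard_image_of_injOn hinj, Set.ncard_coe_finset,
      Finset.card_range]
  rw [hcard]
  by_cases hx0N : a * x0 ≤ N
  · rw [hK, if_pos hx0N]
    rcases Nat.eq_zero_or_pos (a * x0) with h0 | hpos
    · right; rw [h0, Nat.sub_zero]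
    · exact aux_div (a * b) N (a * x0) (Nat.mul_pos ha hb) (by omega) hx0N
  · left
    rw [hK, if_neg hx0N]
    have hlt : N < a * b := by omega
    rw [Nat.div_eq_of_lt hlt]
end
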